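/- Conversely, let M ∈ F^{m×n} and C ∈ F^{r×(n-r)}. If for every row r_ℓ of M and every subset T ⊆ {1,...,n} of size r+1 the maximal minor |(r_ℓ; −C I_r)|_{*,T} vanishes, then M·(I_{n-r}; C) = 0. Hence the Support Minors-C system and the Kipnis–Shamir system have the same solution set. -/

import Mathlib

open Matrix

/-- Support Minors implies Kipnis–Shamir: if for every row `ℓ` of `M` and every choice
of `r+1` distinct columns the corresponding maximal minor of the matrix obtained by
stacking `M_ℓ` on top of `(−C | I_r)` vanishes, then `M·(I_s ; C) = 0`.  Hence the
Support Minors-C system and the Kipnis–Shamir system have the same solution set. -/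
theorem statement6 {F : Type*} [Field F] (m s r : ℕ)
    (M : Matrix (Fin m) (Fin s ⊕ Fin r) F) (C : Matrix (Fin r) (Fin s) F)
    (h : ∀ (ℓ : Fin m) (t : Fin (r + 1) → Fin s ⊕ Fin r), Function.Injective t →
      (Matrix.of (fun (u j : Fin (r + 1)) =>
          (Fin.cases (M ℓ (t j))
            (fun u' => Matrix.fromCols (-C) (1 : Matrix (Fin r) (Fin r) F) u' (t j))
            u : F)) : Matrix (Fin (r + 1)) (Fin (r + 1)) F).det = 0) :
    M * Matrix.fromRows (1 : Matrix (Fin s) (Fin s) F) C = 0 := by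
  ext ℓ k
  set t : Fin (r + 1) → Fin s ⊕ Fin r :=
    fun j => Fin.cases (Sum.inl k) (fun u => Sum.inr u) j with ht_def
  have ht : Function.Injective t := by
    intro a b hab
    simp only [ht_def] at hab
    induction a using Fin.cases <;> induction b using Fin.cases <;>
      simp only [Fin.cases_zero, Fin.cases_succ] at hab <;>
      simp_all [Fin.succ_inj]
  have H := h ℓ t ht
  set N : Matrix (Fin (r + 1)) (Fin (r + 1)) F :=
    Matrix.of (fun (u j : Fin (r + 1)) =>
      (Fin.cases (M ℓ (t j))
        (fun u' => Matrix.fromCols (-C) (1 : Matrix (Fin r) (Fin r) F) u' (t j))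
        u : F)) with hN_def
  let e : Fin 1 ⊕ Fin r ≃ Fin (r + 1) := finSumFinEquiv.trans (finCongr (Nat.add_comm 1 r))
  have he0 : e (Sum.inl 0) = 0 := by
    simp [e, finSumFinEquiv, Fin.ext_iff]
  have heS : ∀ u : Fin r, e (Sum.inr u) = Fin.succ u := by
    intro u
    simp [e, finSumFinEquiv, Fin.ext_iff, Nat.add_comm]
  have hsub : N.submatrix e e =
      Matrix.fromBlocks (fun _ _ => M ℓ (Sum.inl k)) (fun _ j' => M ℓ (Sum.inr j'))
        (fun u' _ => -C u' k) (1 : Matrix (Fin r) (Fin r) F) := by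
    ext i j
    cases i with
    | inl i =>
      cases j with
      | inl j =>
        simp [Fin.fin_one_eq_zero i, Fin.fin_one_eq_zero j, he0, hN_def, ht_def, Matrix.fromBlocks]
      | inr j =>
        simp [Fin.fin_one_eq_zero i, he0, heS, hN_def, ht_def, Matrix.fromBlocks]
    | inr i =>
      cases j with
      | inl j =>
        simp [Fin.fin_one_eq_zero j, he0, heS, hN_def, ht_def, Matrix.fromBlocks]
      | inr j =>
        simp [heS, hN_def, ht_def, Matrix.fromBlocks]
  have hdet : N.det = M ℓ (Sum.inl k) + ∑ u, M ℓ (Sum.inr u) * C u k := by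
    rw [← Matrix.det_submatrix_equiv_self e N, hsub]
    refine (Matrix.det_fromBlocks_one₂₂ _ _ _).trans ?_
    rw [Matrix.det_fin_one]
    change M ℓ (Sum.inl k) - ∑ u, M ℓ (Sum.inr u) * (-C u k) = _
    simp [Finset.sum_neg_distrib]
  rw [hdet] at H
  simp [Matrix.mul_apply, Fintype.sum_sum_type, Matrix.one_apply, Finset.sum_ite_eq']
  exact H
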